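/- Let R be a commutative ring with identity such that the essential annihilating-ideal graph EG(R) has finite clique number and Z(R) = Nil(R) ≠ 0. Then R is an Artinian local ring. -/

import Mathlib

/-- An ideal is essential if it intersects every nonzero ideal nontrivially. -/
def IsEssentialIdeal (R : Type*) [CommRing R] (E : Ideal R) : Prop :=
  ∀ J : Ideal R, J ≠ ⊥ → E ⊓ J ≠ ⊥

/-- Vertices of the essential annihilating-ideal graph: nonzero ideals with
nonzero annihilator. -/
def AnnVertex (R : Type*) [CommRing R] : Type _ :=
  {I : Ideal R // I ≠ ⊥ ∧ Submodule.annihilator I ≠ ⊥}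

/-- The essential annihilating-ideal graph `EG(R)`. -/
def EG (R : Type*) [CommRing R] : SimpleGraph (AnnVertex R) where
  Adj I J := I ≠ J ∧ IsEssentialIdeal R (Submodule.annihilator (I.1 * J.1))
  symm := by
    constructor
    intro I J h
    refine ⟨h.1.symm, ?_⟩
    rw [mul_comm]
    exact h.2
  loopless := by constructor; intro I h; exact h.1 rfl

section Aux

variable {R : Type*} [CommRing R]

lemma essential_of_le {E F : Ideal R} (h : E ≤ F) (hE : IsEssentialIdeal R E) :
    IsEssentialIdeal R F := by
  intro J hJ hc
  exact hE J hJ (le_bot_iff.mp (le_trans (inf_le_inf_right J h) hc.le))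

lemma essential_inf {E F : Ideal R} (hE : IsEssentialIdeal R E) (hF : IsEssentialIdeal R F) :
    IsEssentialIdeal R (E ⊓ F) := by
  intro J hJ
  have h2 : E ⊓ (F ⊓ J) ≠ ⊥ := hE _ (hF J hJ)
  rwa [← inf_assoc] at h2

lemma essential_ann_nilpotent (x : R) (hx : IsNilpotent x) :
    IsEssentialIdeal R (Submodule.annihilator (Ideal.span {x})) := by
  classical
  intro J hJ
  obtain ⟨j, hjJ, hj0⟩ := (Submodule.ne_bot_iff J).mp hJ
  obtain ⟨N, hN⟩ := hx
  have hex : ∃ k, j * x ^ k = 0 := ⟨N, by rw [hN, mul_zero]⟩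
  have hm0 : Nat.find hex ≠ 0 := by
    intro h
    have := Nat.find_spec hex
    rw [h, pow_zero, mul_one] at this
    exact hj0 this
  have he0 : j * x ^ (Nat.find hex - 1) ≠ 0 :=
    Nat.find_min hex (by omega)
  have heJ : j * x ^ (Nat.find hex - 1) ∈ J := J.mul_mem_right _ hjJ
  have hex2 : (j * x ^ (Nat.find hex - 1)) * x = 0 := by
    rw [mul_assoc, ← pow_succ, Nat.sub_add_cancel (Nat.pos_of_ne_zero hm0)]
    exact Nat.find_spec hex
  have heA : j * x ^ (Nat.find hex - 1) ∈ Submodule.annihilator (Ideal.span {x}) := by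
    rw [show (Ideal.span {x} : Ideal R) = Submodule.span R {x} from rfl,
      Submodule.mem_annihilator_span_singleton, smul_eq_mul]
    exact hex2
  rw [Submodule.ne_bot_iff]
  exact ⟨
    j * x ^ (Nat.find hex - 1), Submodule.mem_inf.mpr ⟨heA, heJ⟩, he0⟩

lemma essential_ann_fg (I : Ideal R) (hfg : I.FG) (hle : I ≤ nilradical R) :
    IsEssentialIdeal R (Submodule.annihilator I) := by
  refine Submodule.fg_induction
    (motive := fun I _ => I ≤ nilradical R → IsEssentialIdeal R (Submodule.annihilator I)) ?_ ?_ I hfg hle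
  · intro x hx
    have hxnil : IsNilpotent x := by
      have := hx (Submodule.mem_span_singleton_self x)
      rwa [mem_nilradical] at this
    exact essential_ann_nilpotent x hxnil
  · intro I J _ _ hI hJ hle
    have h1 := hI (le_trans le_sup_left hle)
    have h2 := hJ (le_trans le_sup_right hle)
    refine essential_of_le ?_ (essential_inf h1 h2)
    intro r hr
    rw [Submodule.mem_inf] at hr
    rw [Submodule.mem_annihilator]
    intro n hn
    obtain ⟨i, hi, j, hj, rfl⟩ := Submodule.mem_sup.mp hn
    have hri := Submodule.mem_annihilator.mp hr.1 i hi
    have hrj := Submodule.mem_annihilator.mp hr.2 j hj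
    rw [smul_add, hri, hrj, add_zero]

lemma fg_sSup_of_finite {s : Set (Ideal R)} (hs : s.Finite)
    (h : ∀ I ∈ s, I.FG) : (sSup s).FG := by
  classical
  rw [← hs.coe_toFinset, ← Finset.sup_id_eq_sSup]
  exact Submodule.fg_finset_sup _ _ (fun i hi => h i (hs.mem_toFinset.mp hi))

end Aux

theorem artinian_local_of_finite_clique_and_zeroDivisors_eq_nilradical
    {R : Type*} [CommRing R]
    (hclique : ∃ n : ℕ, ∀ s : Finset (AnnVertex R), (EG R).IsClique ↑s → s.card ≤ n)
    (hZ : {x : R | ∃ y : R, y ≠ 0 ∧ x * y = 0} = {x : R | IsNilpotent x})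
    (hnil : nilradical R ≠ ⊥) :
    IsArtinianRing R ∧ IsLocalRing R := by
  classical
  obtain ⟨n, hn⟩ := hclique
  haveI hnt : Nontrivial R := by
    by_contra h
    rw [not_nontrivial_iff_subsingleton] at h
    exact hnil (Subsingleton.elim _ _)
  have hZD : ∀ x : R, (∃ y : R, y ≠ 0 ∧ x * y = 0) → IsNilpotent x := fun x hx =>
    (Set.ext_iff.mp hZ x).mp hx
  -- essential ideals are nonzero
  have hessne : ∀ E : Ideal R, IsEssentialIdeal R E → E ≠ ⊥ := by
    intro E hE
    have htb : (⊤ : Ideal R) ≠ ⊥ := by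
      intro h
      have h1 : (1 : R) ∈ (⊥ : Ideal R) := h ▸ Submodule.mem_top
      rw [Submodule.mem_bot] at h1
      exact one_ne_zero h1
    have h2 := hE ⊤ htb
    rwa [inf_top_eq] at h2
  -- the set of vertices that are f.g. and contained in the nilradical is a clique
  set S' : Set (AnnVertex R) := {v | (v.1 : Ideal R).FG ∧ v.1 ≤ nilradical R} with hS'def
  have hclq : (EG R).IsClique S' := by
    intro v hv w hw hvw
    exact ⟨hvw, essential_ann_fg _ (Submodule.FG.mul hv.1 hw.1)
      (le_trans Ideal.mul_le_right hw.2)⟩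
  have hS'fin : S'.Finite := by
    rw [← Set.not_infinite]
    intro hinf
    obtain ⟨t, hts, htc⟩ := hinf.exists_subset_card_eq (n + 1)
    have := hn t (hclq.subset hts)
    omega
  -- hence there are finitely many nonzero f.g. ideals inside the nilradical
  have hSfin : {I : Ideal R | I ≠ ⊥ ∧ I.FG ∧ I ≤ nilradical R}.Finite := by
    have hsub : {I : Ideal R | I ≠ ⊥ ∧ I.FG ∧ I ≤ nilradical R} ⊆
        (fun v : AnnVertex R => v.1) '' S' := by
      intro I hI
      have hann : Submodule.annihilator I ≠ ⊥ :=
        hessne _ (essential_ann_fg I hI.2.1 hI.2.2)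
      exact ⟨⟨I, hI.1, hann⟩, ⟨hI.2.1, hI.2.2⟩, rfl⟩
    exact (hS'fin.image _).subset hsub
  -- every ideal contained in the nilradical is finitely generated
  have hFGnil : ∀ I : Ideal R, I ≤ nilradical R → I.FG := by
    intro I hI
    have hsub : {J : Ideal R | J.FG ∧ J ≤ I} ⊆
        insert ⊥ {J : Ideal R | J ≠ ⊥ ∧ J.FG ∧ J ≤ nilradical R} := by
      intro J hJ
      rcases eq_or_ne J ⊥ with h | h
      · exact Set.mem_insert_iff.mpr (Or.inl h)
      · exact Set.mem_insert_iff.mpr (Or.inr ⟨h, hJ.1, le_trans hJ.2 hI⟩)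
    have hfin : {J : Ideal R | J.FG ∧ J ≤ I}.Finite := (hSfin.insert ⊥).subset hsub
    have heq : I = sSup {J : Ideal R | J.FG ∧ J ≤ I} := by
      apply le_antisymm
      · intro x hx
        have hmem : Ideal.span {x} ∈ {J : Ideal R | J.FG ∧ J ≤ I} :=
          ⟨Submodule.fg_span_singleton x, by
            rw [Ideal.span_le, Set.singleton_subset_iff]; exact hx⟩
        exact le_sSup hmem (Submodule.mem_span_singleton_self x)
      · exact sSup_le fun J hJ => hJ.2
    rw [heq]
    exact fg_sSup_of_finite hfin fun J hJ => hJ.1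
  -- there are finitely many ideals contained in the nilradical
  have hNfin : {I : Ideal R | I ≤ nilradical R}.Finite := by
    refine (hSfin.insert ⊥).subset ?_
    intro I hI
    rcases eq_or_ne I ⊥ with h | h
    · exact Set.mem_insert_iff.mpr (Or.inl h)
    · exact Set.mem_insert_iff.mpr (Or.inr ⟨h, hFGnil I hI, hI⟩)
  -- every ideal contained in the nilradical is an Artinian module
  have hart : ∀ K : Ideal R, K ≤ nilradical R → IsArtinian R K := by
    intro K hK
    have h1 : {J : Ideal R | J ≤ K}.Finite := hNfin.subset fun J hJ => le_trans hJ hK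
    haveI h2 : Finite {J : Ideal R | J ≤ K} := h1.to_subtype
    haveI h2' : Finite {J : Ideal R // J ≤ K} :=
      Finite.of_equiv _ (Equiv.subtypeEquivRight (fun _ => Iff.rfl) :
        {J : Ideal R // J ∈ {J : Ideal R | J ≤ K}} ≃ {J : Ideal R // J ≤ K})
    haveI h3 : Finite (Submodule R K) :=
      Finite.of_equiv _ (Submodule.MapSubtype.orderIso K).symm.toEquiv
    exact ⟨Finite.wellFounded_of_trans_of_irrefl _⟩
  -- pick a nonzero element with square zero
  obtain ⟨x, hxnil, hx0⟩ := (Submodule.ne_bot_iff _).mp hnil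
  have hxn : ∃ k : ℕ, x ^ k = 0 := mem_nilradical.mp hxnil
  have hN0 : Nat.find hxn ≠ 0 := by
    intro h
    have := Nat.find_spec hxn
    rw [h, pow_zero] at this
    exact one_ne_zero this
  have hN1 : Nat.find hxn ≠ 1 := by
    intro h
    have := Nat.find_spec hxn
    rw [h, pow_one] at this
    exact hx0 this
  set a : R := x ^ (Nat.find hxn - 1) with ha
  have ha0 : a ≠ 0 := Nat.find_min hxn (by omega)
  have haa : a * a = 0 := by
    have h2 : (Nat.find hxn - 1) + (Nat.find hxn - 1) =
        Nat.find hxn + (Nat.find hxn - 2) := by omega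
    rw [ha, ← pow_add, h2, pow_add, Nat.find_spec hxn, zero_mul]
  -- the torsion ideal of a and the span of a are inside the nilradical
  have htors_le : Ideal.torsionOf R R a ≤ nilradical R := by
    intro r hr
    rw [Ideal.mem_torsionOf_iff, smul_eq_mul] at hr
    exact mem_nilradical.mpr (hZD r ⟨a, ha0, hr⟩)
  have hspan_le : Submodule.span R {a} ≤ nilradical R := by
    rw [Submodule.span_le, Set.singleton_subset_iff]
    show a ∈ nilradical R
    exact mem_nilradical.mpr ⟨2, by rw [pow_two]; exact haa⟩
  haveI hA1 : IsArtinian R (Ideal.torsionOf R R a) := hart _ htors_le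
  haveI hA2 : IsArtinian R (Submodule.span R {a}) := hart _ hspan_le
  haveI hA3 : IsArtinian R (R ⧸ Ideal.torsionOf R R a) :=
    isArtinian_of_linearEquiv (Ideal.quotTorsionOfEquivSpanSingleton R R a).symm
  haveI hartR : IsArtinianRing R :=
    isArtinian_of_range_eq_ker (Ideal.torsionOf R R a).subtype (Ideal.torsionOf R R a).mkQ
      (by rw [Submodule.range_subtype, Submodule.ker_mkQ])
  -- locality: nonunits are exactly the nilpotents
  have hnonunit_nil : ∀ r : R, ¬IsUnit r → IsNilpotent r := by
    intro r hr
    by_cases hz : ∃ y : R, y ≠ 0 ∧ r * y = 0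
    · exact hZD r hz
    · exfalso
      push_neg at hz
      have hinj : Function.Injective (LinearMap.mulLeft R r) := by
        intro u v huv
        simp only [LinearMap.mulLeft_apply] at huv
        by_contra hne
        have h0 : r * (u - v) = 0 := by rw [mul_sub, huv, sub_self]
        exact hz (u - v) (sub_ne_zero.mpr hne) h0
      have hsurj :=
        IsArtinian.surjective_of_injective_endomorphism (LinearMap.mulLeft R r) hinj
      obtain ⟨y, hy⟩ := hsurj 1
      simp only [LinearMap.mulLeft_apply] at hy
      exact hr (IsUnit.of_mul_eq_one y hy)
  have hnil_nonunit : ∀ r : R, IsNilpotent r → ¬IsUnit r := by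
    intro r hr hu
    obtain ⟨k, hk⟩ := hr
    have h1 : IsUnit (r ^ k) := hu.pow k
    rw [hk] at h1
    exact not_isUnit_zero h1
  have hloc : IsLocalRing R := by
    apply IsLocalRing.of_nonunits_add
    intro p q hp hq
    rw [mem_nonunits_iff] at hp hq ⊢
    exact hnil_nonunit _
      (Commute.isNilpotent_add (Commute.all p q) (hnonunit_nil p hp) (hnonunit_nil q hq))
  exact ⟨hartR, hloc⟩
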